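/- arXiv:2306.13991 — 4 statements merged into one kernel-verified Lean document; each statement's English description precedes it below -/
import Mathlib

section
/- (Representer theorem) Let F be a real inner product space (Hilbert space), φ : ℝ^d → F a map, and x_1,...,x_m ∈ ℝ^d training points with labels y_1,...,y_m ∈ {-1,1}. Define R(w,b) = (1/2)‖w‖² + C·Σ_i ℓ_{0/1}(1 - y_i(⟨w, φ(x_i)⟩ + b)). If (w*, b*) is a global minimizer of R over F × ℝ, then w* lies in the linear span of {φ(x_1), ..., φ(x_m)}. -/
theorem representer_theorem
    {F : Type*} [NormedAddCommGroup F] [InnerProductSpace ℝ F] [CompleteSpace F]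
    (d m : ℕ) (φ : (Fin d → ℝ) → F) (x : Fin m → (Fin d → ℝ))
    (y : Fin m → ℝ) (hy : ∀ i, y i = 1 ∨ y i = -1) (C : ℝ) (hC : 0 < C)
    (R : F → ℝ → ℝ)
    (hR : ∀ w b, R w b = (1 / 2) * ‖w‖ ^ 2 +
      C * ∑ i : Fin m,
        (if 0 < 1 - y i * (inner ℝ w (φ (x i)) + b) then (1 : ℝ) else 0))
    (wstar : F) (bstar : ℝ)
    (hmin : ∀ w b, R wstar bstar ≤ R w b) :
    wstar ∈ Submodule.span ℝ (Set.range fun i => φ (x i)) := by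
  set K : Submodule ℝ F := Submodule.span ℝ (Set.range fun i => φ (x i)) with hK
  haveI : FiniteDimensional ℝ K := by
    apply FiniteDimensional.span_of_finite
    exact Set.finite_range _
  set v : F := (K.orthogonalProjectionOnto wstar : F) with hv
  have hvK : v ∈ K := (K.orthogonalProjectionOnto wstar).2
  have horth : wstar - v ∈ Kᗮ := K.sub_starProjection_mem_orthogonal wstar
  have hinner : ∀ i, (inner ℝ v (φ (x i)) : ℝ) = inner ℝ wstar (φ (x i)) := by
    intro i
    have hφ : φ (x i) ∈ K := Submodule.subset_span ⟨i, rfl⟩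
    have := horth (φ (x i)) hφ
    have h2 : (inner ℝ (wstar - v) (φ (x i)) : ℝ) = 0 := by
      rw [real_inner_comm]; exact this
    rw [inner_sub_left] at h2
    linarith
  have hloss : R v bstar - (1/2) * ‖v‖^2 = R wstar bstar - (1/2) * ‖wstar‖^2 := by
    rw [hR, hR]
    simp only [hinner]
    ring
  have hnle : ‖wstar‖^2 ≤ ‖v‖^2 := by
    have := hmin v bstar
    nlinarith
  have hpyth : ‖v‖^2 + ‖wstar - v‖^2 = ‖wstar‖^2 := by
    have h0 : (inner ℝ v (wstar - v) : ℝ) = 0 := by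
      exact horth v hvK
    have := norm_add_sq_real v (wstar - v)
    rw [show v + (wstar - v) = wstar by abel] at this
    rw [h0] at this
    linarith
  have : ‖wstar - v‖^2 ≤ 0 := by linarith
  have hz : wstar - v = 0 := by
    have := sq_nonneg ‖wstar - v‖
    have : ‖wstar - v‖ = 0 := by nlinarith
    exact norm_eq_zero.mp this
  have : wstar = v := by rwa [sub_eq_zero] at hz
  rw [this]; exact hvK
end

section
/- Let K ∈ ℝ^{m×m} be a symmetric positive definite matrix, C > 0, M > 0, y ∈ {-1,1}^m. Define Ψ(c,b) = (1/2)cᵀKc + C·‖(1 - diag(y)Kc - b·y)_+‖_0 where ‖v_+‖_0 counts the positive components of v. Then the minimum of Ψ over ℝ^m × [-M,M] is attained, and the set of minimizers is nonempty and compact. -/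
open Matrix Set

/-- A lower semicontinuous function attains a minimum on a nonempty compact set. -/
private lemma lsc_exists_min {X : Type*} [TopologicalSpace X] [T2Space X]
    {s : Set X} (hs : IsCompact s) (hne : s.Nonempty) {f : X → ℝ}
    (hf : LowerSemicontinuous f) : ∃ p ∈ s, ∀ q ∈ s, f p ≤ f q := by
  haveI : Nonempty ↥s := hne.to_subtype
  set T : ↥s → Set X := fun q => s ∩ {x | f x ≤ f q} with hT
  have hTne : ∀ q : ↥s, (T q).Nonempty := fun q => ⟨q, q.2, show f ↑q ≤ f ↑q from le_rfl⟩
  have hTcl : ∀ q : ↥s, IsClosed (T q) := fun q =>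
    hs.isClosed.inter (hf.isClosed_preimage (f q))
  have hTc : ∀ q : ↥s, IsCompact (T q) := fun q =>
    hs.of_isClosed_subset (hTcl q) inter_subset_left
  have hdir : Directed (· ⊇ ·) T := by
    intro a b
    rcases le_total (f a) (f b) with h | h
    · exact ⟨a, fun x hx => hx,
        fun x hx => ⟨hx.1, show f x ≤ f ↑b from le_trans hx.2 h⟩⟩
    · exact ⟨b, fun x hx => ⟨hx.1, show f x ≤ f ↑a from le_trans hx.2 h⟩,
        fun x hx => hx⟩
  obtain ⟨x, hx⟩ := IsCompact.nonempty_iInter_of_directed_nonempty_isCompact_isClosed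
    T hdir hTne hTc hTcl
  simp only [mem_iInter] at hx
  refine ⟨x, (hx (Classical.arbitrary _)).1, fun q hq => (hx ⟨q, hq⟩).2⟩

/-- Coercivity of the quadratic form of a positive definite matrix. -/
private lemma posdef_coercive {m : ℕ} {K : Matrix (Fin m) (Fin m) ℝ} (hKpd : K.PosDef) :
    ∃ ε > 0, ∀ c : Fin m → ℝ, ε * ‖c‖ ^ 2 ≤ dotProduct c (K.mulVec c) := by
  have hpos : ∀ c : Fin m → ℝ, c ≠ 0 → 0 < dotProduct c (K.mulVec c) := by
    intro c hc
    simpa using hKpd.dotProduct_mulVec_pos hc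
  have hQcont : Continuous fun c : Fin m → ℝ => dotProduct c (K.mulVec c) := by
    simp only [dotProduct, Matrix.mulVec]
    exact continuous_finset_sum _ fun i _ => (continuous_apply i).mul
      (continuous_finset_sum _ fun j _ => continuous_const.mul (continuous_apply j))
  rcases Nat.eq_zero_or_pos m with hm | hm
  · refine ⟨1, one_pos, fun c => ?_⟩
    subst hm
    have h1 : ‖c‖ = 0 := by rw [Subsingleton.elim c 0]; simp
    have h2 : dotProduct c (K.mulVec c) = 0 := by
      simp [dotProduct]
    rw [h1, h2]; norm_num
  · -- the unit sphere is compact and nonempty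
    have hSne : (Metric.sphere (0 : Fin m → ℝ) 1).Nonempty := by
      refine ⟨Pi.single ⟨0, hm⟩ 1, ?_⟩
      simp [mem_sphere_zero_iff_norm, Pi.norm_single]
    obtain ⟨c₀, hc₀S, hc₀⟩ := (isCompact_sphere (0 : Fin m → ℝ) 1).exists_isMinOn hSne
      hQcont.continuousOn
    set ε := dotProduct c₀ (K.mulVec c₀) with hε
    have hc₀norm : ‖c₀‖ = 1 := mem_sphere_zero_iff_norm.1 hc₀S
    have hεpos : 0 < ε := by
      apply hpos
      intro h
      rw [h] at hc₀norm; simp at hc₀norm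
    refine ⟨ε, hεpos, fun c => ?_⟩
    by_cases hc : c = 0
    · subst hc; simp [dotProduct]
    · have hcn : 0 < ‖c‖ := norm_pos_iff.2 hc
      set u : Fin m → ℝ := ‖c‖⁻¹ • c with hu
      have hun : ‖u‖ = 1 := by
        rw [hu, norm_smul]
        simp [abs_of_pos (inv_pos.2 hcn), inv_mul_cancel₀ hcn.ne']
      have hQu : ε ≤ dotProduct u (K.mulVec u) :=
        hc₀ (mem_sphere_zero_iff_norm.2 hun)
      have hcu : c = ‖c‖ • u := by
        rw [hu, smul_smul, mul_inv_cancel₀ hcn.ne', one_smul]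
      have key : dotProduct c (K.mulVec c)
          = ‖c‖ ^ 2 * dotProduct u (K.mulVec u) := by
        conv_lhs => rw [hcu]
        simp only [smul_dotProduct, dotProduct_smul, Matrix.mulVec_smul,
          smul_eq_mul]
        ring
      rw [key]
      nlinarith [sq_nonneg ‖c‖]

theorem existence_of_minimizer
    (m : ℕ) (K : Matrix (Fin m) (Fin m) ℝ) (hK : K.IsSymm) (hKpd : K.PosDef)
    (C M : ℝ) (hC : 0 < C) (hM : 0 < M)
    (y : Fin m → ℝ) (hy : ∀ i, y i = 1 ∨ y i = -1)
    (Ψ : (Fin m → ℝ) × ℝ → ℝ)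
    (hΨ : ∀ c b, Ψ (c, b) = (1 / 2) * dotProduct c (K.mulVec c) +
      C * ∑ i : Fin m,
        (if 0 < 1 - y i * K.mulVec c i - b * y i then (1 : ℝ) else 0))
    (A : Set ((Fin m → ℝ) × ℝ)) (hA : A = Set.univ ×ˢ Set.Icc (-M) M) :
    (∃ p ∈ A, ∀ q ∈ A, Ψ p ≤ Ψ q) ∧
      ({p ∈ A | ∀ q ∈ A, Ψ p ≤ Ψ q}).Nonempty ∧
      IsCompact {p ∈ A | ∀ q ∈ A, Ψ p ≤ Ψ q} := by
  obtain ⟨ε, hεpos, hcoer⟩ := posdef_coercive hKpd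
  have hΨ' : ∀ p : (Fin m → ℝ) × ℝ, Ψ p = (1 / 2) * dotProduct p.1 (K.mulVec p.1) +
      C * ∑ i : Fin m,
        (if 0 < 1 - y i * K.mulVec p.1 i - p.2 * y i then (1 : ℝ) else 0) := fun p => hΨ p.1 p.2
  -- continuity of the affine constraint functions
  have hgcont : ∀ i : Fin m, Continuous fun p : (Fin m → ℝ) × ℝ =>
      1 - y i * K.mulVec p.1 i - p.2 * y i := by
    intro i
    have h1 : Continuous fun p : (Fin m → ℝ) × ℝ => K.mulVec p.1 i := by
      simp only [Matrix.mulVec, dotProduct]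
      exact continuous_finset_sum _ fun j _ =>
        continuous_const.mul ((continuous_apply j).comp continuous_fst)
    fun_prop
  -- lower semicontinuity of Ψ
  have hQcont : Continuous fun p : (Fin m → ℝ) × ℝ =>
      (1 / 2) * dotProduct p.1 (K.mulVec p.1) := by
    simp only [dotProduct, Matrix.mulVec]
    refine continuous_const.mul (continuous_finset_sum _ fun i _ => ?_)
    exact ((continuous_apply i).comp continuous_fst).mul
      (continuous_finset_sum _ fun j _ =>
        continuous_const.mul ((continuous_apply j).comp continuous_fst))
  have hlsc : LowerSemicontinuous Ψ := by
    have heq : Ψ = fun p => (1 / 2) * dotProduct p.1 (K.mulVec p.1) +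
        ∑ i : Fin m, (if 0 < 1 - y i * K.mulVec p.1 i - p.2 * y i then C else 0) := by
      funext p
      rw [hΨ' p, Finset.mul_sum]
      congr 1
      refine Finset.sum_congr rfl fun i _ => ?_
      split <;> simp
    rw [heq]
    refine LowerSemicontinuous.add hQcont.lowerSemicontinuous ?_
    refine lowerSemicontinuous_sum fun i _ => ?_
    have hopen : IsOpen {p : (Fin m → ℝ) × ℝ | 0 < 1 - y i * K.mulVec p.1 i - p.2 * y i} :=
      isOpen_lt continuous_const (hgcont i)
    have := hopen.lowerSemicontinuous_indicator (y := C) hC.le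
    have e : (fun p : (Fin m → ℝ) × ℝ => if 0 < 1 - y i * K.mulVec p.1 i - p.2 * y i then C else 0) =
        {p : (Fin m → ℝ) × ℝ | 0 < 1 - y i * K.mulVec p.1 i - p.2 * y i}.indicator fun _ => C := by
      funext p
      simp [Set.indicator_apply]
    rw [e]
    exact this
  have hΨlb : ∀ p : (Fin m → ℝ) × ℝ, (1 / 2) * (ε * ‖p.1‖ ^ 2) ≤ Ψ p := by
    intro p
    rw [hΨ' p]
    have h1 : ε * ‖p.1‖ ^ 2 ≤ dotProduct p.1 (K.mulVec p.1) := hcoer p.1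
    have h2 : (0 : ℝ) ≤ ∑ i : Fin m,
        (if 0 < 1 - y i * K.mulVec p.1 i - p.2 * y i then (1 : ℝ) else 0) :=
      Finset.sum_nonneg fun i _ => by split <;> norm_num
    nlinarith
  have hAcl : IsClosed A := by rw [hA]; exact isClosed_univ.prod isClosed_Icc
  set p₀ : (Fin m → ℝ) × ℝ := (0, 0) with hp₀
  have hp₀A : p₀ ∈ A := by
    rw [hA]
    refine ⟨trivial, ?_, ?_⟩ <;> simp only [hp₀] <;> linarith
  have hΨ₀ : 0 ≤ Ψ p₀ := by
    have := hΨlb p₀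
    simp only [hp₀, norm_zero] at this
    linarith
  -- the restricted set B
  set B : Set ((Fin m → ℝ) × ℝ) := A ∩ {p | Ψ p ≤ Ψ p₀} with hB
  have hBcl : IsClosed B := hAcl.inter (hlsc.isClosed_preimage (Ψ p₀))
  set R : ℝ := max M (Real.sqrt (2 * Ψ p₀ / ε)) with hR
  have hBsub : B ⊆ Metric.closedBall 0 R := by
    rintro ⟨c, b⟩ ⟨hpA, hpΨ⟩
    rw [hA] at hpA
    have hb : |b| ≤ M := abs_le.2 ⟨hpA.2.1, hpA.2.2⟩
    have hcb : ‖c‖ ^ 2 ≤ 2 * Ψ p₀ / ε := by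
      have h1 := hΨlb (c, b)
      simp only at h1
      have h2 : Ψ (c, b) ≤ Ψ p₀ := hpΨ
      rw [le_div_iff₀ hεpos]
      nlinarith
    have hcnorm : ‖c‖ ≤ Real.sqrt (2 * Ψ p₀ / ε) := by
      calc ‖c‖ = Real.sqrt (‖c‖ ^ 2) := by rw [Real.sqrt_sq (norm_nonneg _)]
        _ ≤ _ := Real.sqrt_le_sqrt hcb
    rw [Metric.mem_closedBall, dist_zero_right, Prod.norm_def]
    simp only [Real.norm_eq_abs]
    exact max_le (le_trans hcnorm (le_max_right _ _)) (le_trans hb (le_max_left _ _))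
  have hBcompact : IsCompact B := by
    rw [Metric.isCompact_iff_isClosed_bounded]
    exact ⟨hBcl, (Metric.isBounded_closedBall).subset hBsub⟩
  have hBne : B.Nonempty := ⟨p₀, hp₀A, show Ψ p₀ ≤ Ψ p₀ from le_rfl⟩
  obtain ⟨p, hpB, hpmin⟩ := lsc_exists_min hBcompact hBne hlsc
  -- p is a global minimizer over A
  have hpminA : ∀ q ∈ A, Ψ p ≤ Ψ q := by
    intro q hq
    by_cases h : Ψ q ≤ Ψ p₀
    · exact hpmin q ⟨hq, h⟩
    · push_neg at h
      exact le_trans (hpmin p₀ ⟨hp₀A, show Ψ p₀ ≤ Ψ p₀ from le_rfl⟩) h.le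
  refine ⟨⟨p, hpB.1, hpminA⟩, ⟨p, hpB.1, hpminA⟩, ?_⟩
  -- compactness of the set of minimizers
  have hMsub : {p ∈ A | ∀ q ∈ A, Ψ p ≤ Ψ q} ⊆ B := by
    rintro x ⟨hxA, hxmin⟩
    exact ⟨hxA, hxmin p₀ hp₀A⟩
  have hMcl : IsClosed {p ∈ A | ∀ q ∈ A, Ψ p ≤ Ψ q} := by
    have : {p ∈ A | ∀ q ∈ A, Ψ p ≤ Ψ q} = A ∩ ⋂ q ∈ A, Ψ ⁻¹' Set.Iic (Ψ q) := by
      ext x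
      simp [Set.mem_iInter, Set.mem_preimage]
    rw [this]
    exact hAcl.inter (isClosed_biInter fun q _ => hlsc.isClosed_preimage (Ψ q))
  exact hBcompact.of_isClosed_subset hMcl hMsub
end

section
/- For γ, C > 0 and η ∈ ℝ, the set of minimizers of v ↦ C·ℓ_{0/1}(v) + (1/(2γ))(v - η)² is: {0} if 0 < η < √(2γC); {0, η} if η = √(2γC); and {η} otherwise (i.e., if η ≤ 0 or η > √(2γC)). -/
theorem prox_l01_characterization (γ C η : ℝ) (hγ : 0 < γ) (hC : 0 < C)
    (f : ℝ → ℝ)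
    (hf : ∀ v, f v = C * (if 0 < v then (1 : ℝ) else 0) + (1 / (2 * γ)) * (v - η) ^ 2) :
    (0 < η ∧ η < Real.sqrt (2 * γ * C) → {v | ∀ w, f v ≤ f w} = {0}) ∧
    (η = Real.sqrt (2 * γ * C) → {v | ∀ w, f v ≤ f w} = {0, η}) ∧
    (η ≤ 0 ∨ Real.sqrt (2 * γ * C) < η → {v | ∀ w, f v ≤ f w} = {η}) := by
  have hγ2 : (0:ℝ) < 2 * γ := by linarith
  set c : ℝ := 1 / (2 * γ) with hc
  have hcpos : 0 < c := by positivity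
  have hcγ : c * (2 * γ * C) = C := by
    rw [hc]; field_simp
  have fpos : ∀ v, 0 < v → f v = C + c * (v - η) ^ 2 := by
    intro v hv; rw [hf v, if_pos hv]; ring
  have fneg : ∀ v, v ≤ 0 → f v = c * (v - η) ^ 2 := by
    intro v hv; rw [hf v, if_neg (not_lt.mpr hv)]; ring
  have hsq : Real.sqrt (2 * γ * C) ^ 2 = 2 * γ * C :=
    Real.sq_sqrt (by positivity)
  have hsnn : 0 ≤ Real.sqrt (2 * γ * C) := Real.sqrt_nonneg _
  -- lower bound on the negative side, when η > 0
  have hgeq : ∀ w, w ≤ 0 → 0 < η → c * η ^ 2 ≤ f w := by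
    intro w hw hη
    rw [fneg w hw]
    have h1 : η ^ 2 ≤ (w - η) ^ 2 := by
      nlinarith [mul_nonneg (neg_nonneg.mpr hw) (by linarith : (0:ℝ) ≤ 2 * η - w)]
    exact mul_le_mul_of_nonneg_left h1 hcpos.le
  have hCle : ∀ w, 0 < w → C ≤ f w := by
    intro w hw
    rw [fpos w hw]
    nlinarith [mul_nonneg hcpos.le (sq_nonneg (w - η))]
  -- small helper: v ≤ 0 and (v-η)² ≤ η² with η > 0 forces v = 0
  have hzero : ∀ v, v ≤ 0 → 0 < η → c * (v - η) ^ 2 ≤ c * η ^ 2 → v = 0 := by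
    intro v hv hη h
    have h1 : (v - η) ^ 2 ≤ η ^ 2 := le_of_mul_le_mul_left h hcpos
    have h2 : v ^ 2 ≤ 0 := by
      nlinarith [mul_nonneg (neg_nonneg.mpr hv) hη.le]
    have : v ^ 2 = 0 := le_antisymm h2 (sq_nonneg v)
    exact sq_eq_zero_iff.mp this
  refine ⟨?_, ?_, ?_⟩
  · rintro ⟨hη0, hηs⟩
    have hη2 : η ^ 2 < 2 * γ * C := by nlinarith
    have hkey : c * η ^ 2 < C := by
      calc c * η ^ 2 < c * (2 * γ * C) := by
            exact mul_lt_mul_of_pos_left hη2 hcpos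
        _ = C := hcγ
    ext v
    simp only [Set.mem_setOf_eq, Set.mem_singleton_iff]
    constructor
    · intro h
      have h0 := h 0
      rw [fneg 0 le_rfl] at h0
      have h0' : f v ≤ c * η ^ 2 := by
        have : ((0:ℝ) - η) ^ 2 = η ^ 2 := by ring
        rw [this] at h0; exact h0
      rcases lt_or_ge 0 v with hv | hv
      · exfalso
        rw [fpos v hv] at h0'
        nlinarith [mul_nonneg hcpos.le (sq_nonneg (v - η))]
      · rw [fneg v hv] at h0'
        exact hzero v hv hη0 h0'
    · rintro rfl
      intro w
      rw [fneg 0 le_rfl]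
      have e0 : ((0:ℝ) - η) ^ 2 = η ^ 2 := by ring
      rw [e0]
      rcases lt_or_ge 0 w with hw | hw
      · exact le_trans hkey.le (hCle w hw)
      · exact hgeq w hw hη0
  · intro hη
    have hη0 : 0 < η := by
      rw [hη]; exact Real.sqrt_pos.mpr (by positivity)
    have hη2 : η ^ 2 = 2 * γ * C := by rw [hη]; exact hsq
    have hkey : c * η ^ 2 = C := by rw [hη2]; exact hcγ
    have hlb : ∀ w, C ≤ f w := by
      intro w
      rcases lt_or_ge 0 w with hw | hw
      · exact hCle w hw
      · rw [← hkey]; exact hgeq w hw hη0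
    ext v
    simp only [Set.mem_setOf_eq, Set.mem_insert_iff, Set.mem_singleton_iff]
    constructor
    · intro h
      have h0 := h 0
      rw [fneg 0 le_rfl] at h0
      have h0' : f v ≤ C := by
        have e0 : ((0:ℝ) - η) ^ 2 = η ^ 2 := by ring
        rw [e0, hkey] at h0; exact h0
      rcases lt_or_ge 0 v with hv | hv
      · right
        rw [fpos v hv] at h0'
        have h1 : c * (v - η) ^ 2 ≤ 0 := by linarith
        have h2 : (v - η) ^ 2 ≤ 0 := by
          by_contra hcon
          push_neg at hcon
          nlinarith
        have : (v - η) ^ 2 = 0 := le_antisymm h2 (sq_nonneg _)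
        have := sq_eq_zero_iff.mp this
        linarith
      · left
        rw [fneg v hv, ← hkey] at h0'
        exact hzero v hv hη0 h0'
    · rintro (rfl | hveq)
      · intro w
        rw [fneg 0 le_rfl]
        have e0 : ((0:ℝ) - η) ^ 2 = η ^ 2 := by ring
        rw [e0, hkey]
        exact hlb w
      · intro w
        rw [hveq, fpos η hη0]
        simp only [sub_self]
        calc C + c * 0 ^ 2 = C := by ring
          _ ≤ f w := hlb w
  · rintro (hη | hη)
    · -- η ≤ 0 : minimizer is η, value 0
      have hfη : f η = 0 := by
        rw [fneg η hη]; simp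
      have hnn : ∀ w, 0 ≤ f w := by
        intro w
        rcases lt_or_ge 0 w with hw | hw
        · rw [fpos w hw]; positivity
        · rw [fneg w hw]; positivity
      ext v
      simp only [Set.mem_setOf_eq, Set.mem_singleton_iff]
      constructor
      · intro h
        have h0 := h η
        rw [hfη] at h0
        rcases lt_or_ge 0 v with hv | hv
        · exfalso
          rw [fpos v hv] at h0
          nlinarith [mul_nonneg hcpos.le (sq_nonneg (v - η))]
        · rw [fneg v hv] at h0
          have h1 : (v - η) ^ 2 ≤ 0 := by
            by_contra hcon
            push_neg at hcon
            nlinarith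
          have : (v - η) ^ 2 = 0 := le_antisymm h1 (sq_nonneg _)
          have := sq_eq_zero_iff.mp this
          linarith
      · rintro rfl
        intro w
        rw [hfη]
        exact hnn w
    · -- √(2γC) < η : minimizer is η, value C
      have hη0 : 0 < η := lt_of_le_of_lt hsnn hη
      have hη2 : 2 * γ * C < η ^ 2 := by nlinarith
      have hkey : C < c * η ^ 2 := by
        calc C = c * (2 * γ * C) := hcγ.symm
          _ < c * η ^ 2 := mul_lt_mul_of_pos_left hη2 hcpos
      have hfη : f η = C := by
        rw [fpos η hη0]; simp
      ext v
      simp only [Set.mem_setOf_eq, Set.mem_singleton_iff]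
      constructor
      · intro h
        have h0 := h η
        rw [hfη] at h0
        rcases lt_or_ge 0 v with hv | hv
        · rw [fpos v hv] at h0
          have h1 : c * (v - η) ^ 2 ≤ 0 := by linarith
          have h2 : (v - η) ^ 2 ≤ 0 := by
            by_contra hcon
            push_neg at hcon
            nlinarith
          have : (v - η) ^ 2 = 0 := le_antisymm h2 (sq_nonneg _)
          have := sq_eq_zero_iff.mp this
          linarith
        · exfalso
          have := hgeq v hv hη0
          rw [fneg v hv] at h0 this
          linarith
      · rintro rfl
        intro w
        rw [hfη]
        rcases lt_or_ge 0 w with hw | hw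
        · exact hCle w hw
        · exact le_trans hkey.le (hgeq w hw hη0)
end

section
/- The limiting (Mordukhovich) subdifferential of ℓ_{0/1} at any point t ≠ 0 is {0}, and at t = 0 it equals ℝ_+ = [0, ∞). -/
/-- ℓ0/1 hinge loss. -/
noncomputable def l01 (t : ℝ) : ℝ := if 0 < t then 1 else 0

/-- Regular (Fréchet) subdifferential of `f : ℝ → ℝ` at `z`. -/
def regSubdiff (f : ℝ → ℝ) (z : ℝ) : Set ℝ :=
  {v | ∀ ε > 0, ∃ δ > 0, ∀ t, t ≠ z → |t - z| < δ →
    f t - f z - v * (t - z) ≥ -ε * |t - z|}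

/-- Limiting (Mordukhovich) subdifferential of `f : ℝ → ℝ` at `z`. -/
def limSubdiff (f : ℝ → ℝ) (z : ℝ) : Set ℝ :=
  {v | ∃ zs vs : ℕ → ℝ,
    Filter.Tendsto zs Filter.atTop (nhds z) ∧
    Filter.Tendsto (fun k => f (zs k)) Filter.atTop (nhds (f z)) ∧
    (∀ k, vs k ∈ regSubdiff f (zs k)) ∧
    Filter.Tendsto vs Filter.atTop (nhds v)}

lemma l01_local {z t : ℝ} (hz : z ≠ 0) (h : |t - z| < |z|) : l01 t = l01 z := by
  rcases hz.lt_or_gt with h1 | h1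
  · rw [abs_of_neg h1] at h
    have ht : t < 0 := by rcases abs_lt.mp h with ⟨_, h3⟩; linarith
    simp [l01, not_lt.mpr ht.le, not_lt.mpr h1.le]
  · rw [abs_of_pos h1] at h
    have ht : 0 < t := by rcases abs_lt.mp h with ⟨h2, _⟩; linarith
    simp [l01, ht, h1]

lemma regSubdiff_l01_ne (z : ℝ) (hz : z ≠ 0) : regSubdiff l01 z = {0} := by
  ext v
  constructor
  · intro hv
    have key : ∀ ε : ℝ, 0 < ε → |v| ≤ ε := by
      intro ε hε
      obtain ⟨δ, hδ, hP⟩ := hv ε hε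
      set s := min δ |z| / 2 with hs
      have hzpos : 0 < |z| := abs_pos.mpr hz
      have hspos : 0 < s := by positivity
      have hsδ : s < δ := by
        have : min δ |z| ≤ δ := min_le_left _ _
        simp only [hs]; linarith
      have hsz : s < |z| := by
        have : min δ |z| ≤ |z| := min_le_right _ _
        simp only [hs]; linarith
      have h1 := hP (z + s) (by intro h; nlinarith [add_right_cancel (a := z) (b := s) (c := 0)]) ?_
      · have h2 := hP (z - s) (by intro h; nlinarith [sub_eq_self.mp h]) ?_
        · have e1 : l01 (z + s) = l01 z := l01_local hz (by rw [add_sub_cancel_left, abs_of_pos hspos]; exact hsz)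
          have e2 : l01 (z - s) = l01 z := l01_local hz (by rw [sub_sub_cancel_left, abs_neg, abs_of_pos hspos]; exact hsz)
          rw [e1, add_sub_cancel_left, abs_of_pos hspos] at h1
          rw [e2, sub_sub_cancel_left, abs_neg, abs_of_pos hspos] at h2
          rw [abs_le]
          constructor <;> nlinarith
        · rw [sub_sub_cancel_left, abs_neg, abs_of_pos hspos]; exact hsδ
      · rw [add_sub_cancel_left, abs_of_pos hspos]; exact hsδ
    have hv0 : |v| ≤ 0 := by
      by_contra h
      push_neg at h
      have := key (|v| / 2) (by linarith)
      linarith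
    simpa using abs_eq_zero.mp (le_antisymm hv0 (abs_nonneg v))
  · rintro rfl
    intro ε hε
    refine ⟨|z|, abs_pos.mpr hz, fun t ht hδ => ?_⟩
    rw [l01_local hz hδ]
    have : 0 ≤ ε * |t - z| := by positivity
    simp only [mul_zero, zero_mul]
    linarith [abs_nonneg (t - z)]

lemma regSubdiff_l01_zero : regSubdiff l01 0 = Set.Ici 0 := by
  ext v
  constructor
  · intro hv
    have key : ∀ ε : ℝ, 0 < ε → -ε ≤ v := by
      intro ε hε
      obtain ⟨δ, hδ, hP⟩ := hv ε hε
      have h := hP (-(δ/2)) (by intro h; nlinarith [neg_eq_zero.mp h]) ?_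
      · have e : l01 (-(δ/2)) = 0 := by simp [l01]; linarith
        have e0 : l01 0 = 0 := by simp [l01]
        simp only [sub_zero] at h
        rw [e, e0, abs_neg, abs_of_pos (by linarith : (0:ℝ) < δ/2)] at h
        nlinarith
      · rw [sub_zero, abs_neg, abs_of_pos (by linarith : (0:ℝ) < δ/2)]; linarith
    show 0 ≤ v
    by_contra h
    push_neg at h
    have := key (-v / 2) (by linarith)
    linarith
  · intro hv
    have hv0 : (0:ℝ) ≤ v := hv
    intro ε hε
    refine ⟨min 1 (1 / (v + 1)), lt_min one_pos (by positivity), fun t ht hδ => ?_⟩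
    rw [sub_zero] at hδ ⊢
    have h0 : l01 0 = 0 := by simp [l01]
    rcases ht.lt_or_gt with h1 | h1
    · have e : l01 t = 0 := by simp [l01]; linarith
      rw [e, h0, abs_of_neg h1] at *
      nlinarith [abs_of_neg h1, hδ]
    · have e : l01 t = 1 := by simp [l01, h1]
      have habs : |t| = t := abs_of_pos h1
      rw [e, h0, habs]
      have h2 : t < 1 / (v + 1) := lt_of_lt_of_le (habs ▸ hδ) (min_le_right _ _)
      have h3 : t * (v + 1) < 1 := by
        rw [lt_div_iff₀ (by linarith : (0:ℝ) < v + 1)] at h2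
        linarith
      nlinarith

theorem limSubdiff_l01 :
    (∀ t : ℝ, t ≠ 0 → limSubdiff l01 t = {0}) ∧
      limSubdiff l01 0 = Set.Ici 0 := by
  constructor
  · intro z hz
    ext v
    constructor
    · rintro ⟨zs, vs, hzs, _, hreg, hvs⟩
      have hne : ∀ᶠ k in Filter.atTop, zs k ≠ 0 := hzs.eventually_ne hz
      have h0 : ∀ᶠ k in Filter.atTop, vs k = 0 := by
        filter_upwards [hne] with k hk
        have := hreg k
        rw [regSubdiff_l01_ne (zs k) hk] at this
        exact this
      have : Filter.Tendsto vs Filter.atTop (nhds 0) :=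
        Filter.Tendsto.congr' (h0.mono fun k hk => hk.symm) tendsto_const_nhds
      exact tendsto_nhds_unique hvs this
    · rintro rfl
      exact ⟨fun _ => z, fun _ => 0, tendsto_const_nhds, tendsto_const_nhds,
        fun k => by rw [regSubdiff_l01_ne z hz]; rfl, tendsto_const_nhds⟩
  · ext v
    constructor
    · rintro ⟨zs, vs, hzs, hfz, hreg, hvs⟩
      have h00 : l01 0 = 0 := by simp [l01]
      rw [h00] at hfz
      have hsmall : ∀ᶠ k in Filter.atTop, l01 (zs k) < 1/2 :=
        hfz.eventually (eventually_lt_nhds (by norm_num : (0:ℝ) < 1/2))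
      have hnn : ∀ᶠ k in Filter.atTop, 0 ≤ vs k := by
        filter_upwards [hsmall] with k hk
        have hle : zs k ≤ 0 := by
          by_contra h
          push_neg at h
          simp [l01, h] at hk
          linarith
        rcases eq_or_lt_of_le hle with heq | hlt
        · have := hreg k
          rw [heq, regSubdiff_l01_zero] at this
          exact this
        · have := hreg k
          rw [regSubdiff_l01_ne (zs k) hlt.ne] at this
          rw [this]
      exact ge_of_tendsto hvs hnn
    · intro hv
      exact ⟨fun _ => 0, fun _ => v, tendsto_const_nhds, tendsto_const_nhds,
        fun k => by rw [regSubdiff_l01_zero]; exact hv, tendsto_const_nhds⟩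
end
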